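/- Let c(x,y) = h(d(x,y)) with h strictly convex and increasing and d the geodesic circle distance. Let x_1,...,x_P and y_1,...,y_P be points of the circle, all pairwise distinct, and let σ be a permutation minimizing Σ_k c(x_k, y_{σ(k)}). If for two indices l ≠ k the open geodesic paths γ(x_l, y_{σ(l)}) and γ(x_k, y_{σ(k)}) intersect (with x_l ≠ x_k and y_{σ(l)} ≠ y_{σ(k)}), then the two paths have the same orientation (both positive or both negative) and neither path is contained in the other. -/

import Mathlib

open Finset

/-- Geodesic distance on the circle `ℝ/ℤ` (perimeter 1), points represented by reals. -/
noncomputable def circDist (x y : ℝ) : ℝ := min (Int.fract (y - x)) (Int.fract (x - y))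

/-- The geodesic arc `γ(x,y)` is *positive* if it runs counterclockwise from `x` to `y`
(antipodal pairs are assigned the counterclockwise arc). -/
def posPath (x y : ℝ) : Prop := Int.fract (y - x) ≤ 1 / 2

/-- `z` belongs to the *open* geodesic arc `γ(x,y)` from `x` to `y` on the circle `ℝ/ℤ`
(the counterclockwise arc being chosen when `x` and `y` are antipodal). -/
def inArc (x y z : ℝ) : Prop :=
  (Int.fract (y - x) ≤ 1 / 2 ∧
    0 < Int.fract (z - x) ∧ Int.fract (z - x) < Int.fract (y - x)) ∨
  (1 / 2 < Int.fract (y - x) ∧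
    0 < Int.fract (z - y) ∧ Int.fract (z - y) < Int.fract (x - y))

lemma fract_shift (u v x : ℝ) :
    Int.fract (Int.fract (u - x) - Int.fract (v - x)) = Int.fract (u - v) := by
  have e : Int.fract (u - x) - Int.fract (v - x)
      = (u - v) - ((⌊u - x⌋ - ⌊v - x⌋ : ℤ) : ℝ) := by
    simp only [Int.fract]; push_cast; ring
  rw [e]
  exact Int.fract_sub_intCast _ _

lemma coord_fract (x P Q : ℝ) :
    Int.fract (P - Q) = Int.fract (Int.fract (P - x) - Int.fract (Q - x)) :=
  (fract_shift P Q x).symm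

lemma fract_cases {p q : ℝ} (hp0 : 0 ≤ p) (hp1 : p < 1) (hq0 : 0 ≤ q) (hq1 : q < 1) :
    (q ≤ p ∧ Int.fract (p - q) = p - q) ∨ (p < q ∧ Int.fract (p - q) = p - q + 1) := by
  rcases le_or_gt q p with hle | hlt
  · exact Or.inl ⟨hle, Int.fract_eq_self.mpr ⟨by linarith, by linarith⟩⟩
  · refine Or.inr ⟨hlt, ?_⟩
    have h2 : Int.fract (p - q + 1) = p - q + 1 :=
      Int.fract_eq_self.mpr ⟨by linarith, by linarith⟩
    rw [← h2, show p - q + 1 = p - q + ((1:ℤ):ℝ) by norm_num, Int.fract_add_intCast]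

lemma coord_ne (x : ℝ) {P Q : ℝ} (hP : P ∈ Set.Ico (0:ℝ) 1) (hQ : Q ∈ Set.Ico (0:ℝ) 1)
    (hne : P ≠ Q) : Int.fract (P - x) ≠ Int.fract (Q - x) := by
  intro heq
  have h0 : Int.fract (P - Q) = 0 := by
    rw [coord_fract x P Q, heq, sub_self, Int.fract_zero]
  rcases fract_cases hP.1 hP.2 hQ.1 hQ.2 with ⟨h1, h2⟩ | ⟨h1, h2⟩
  · exact hne (by linarith [h2.symm.trans h0])
  · have := h2.symm.trans h0; linarith [hP.1, hQ.2]

lemma fract_rev {X Y : ℝ} (hX : X ∈ Set.Ico (0:ℝ) 1) (hY : Y ∈ Set.Ico (0:ℝ) 1)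
    (hne : X ≠ Y) : Int.fract (X - Y) = 1 - Int.fract (Y - X) := by
  rcases fract_cases hX.1 hX.2 hY.1 hY.2 with ⟨h1, h2⟩ | ⟨h1, h2⟩ <;>
    rcases fract_cases hY.1 hY.2 hX.1 hX.2 with ⟨h3, h4⟩ | ⟨h3, h4⟩
  · exact absurd (le_antisymm h3 h1) hne
  · rw [h2, h4]; ring
  · rw [h2, h4]; ring
  · linarith

lemma rev_path {X Y : ℝ} (hX : X ∈ Set.Ico (0:ℝ) 1) (hY : Y ∈ Set.Ico (0:ℝ) 1)
    (hne : X ≠ Y) (hnp : ¬ posPath X Y) :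
    posPath Y X ∧ ∀ z, (inArc X Y z ↔ inArc Y X z) := by
  unfold posPath at *
  push_neg at hnp
  have hr : Int.fract (X - Y) = 1 - Int.fract (Y - X) := fract_rev hX hY hne
  constructor
  · rw [hr]; linarith
  · intro z
    unfold inArc
    constructor
    · rintro (⟨h1, _⟩ | ⟨_, h2, h3⟩)
      · linarith
      · exact Or.inl ⟨by rw [hr]; linarith, h2, h3⟩
    · rintro (⟨_, h2, h3⟩ | ⟨h1, _⟩)
      · exact Or.inr ⟨hnp, h2, h3⟩
      · rw [hr] at h1; linarith

lemma circDist_comm (X Y : ℝ) : circDist X Y = circDist Y X := min_comm _ _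

section Convexity
variable {h : ℝ → ℝ}

lemma h_strictMono (hconv : StrictConvexOn ℝ (Set.Ici 0) h)
    (hmono : MonotoneOn h (Set.Ici 0)) {a b : ℝ} (ha : 0 ≤ a) (hab : a < b) :
    h a < h b := by
  have hb : (0:ℝ) ≤ b := le_trans ha hab.le
  have key := hconv.2 (Set.mem_Ici.mpr ha) (Set.mem_Ici.mpr hb) (ne_of_lt hab)
    (by norm_num : (0:ℝ) < 1/2) (by norm_num : (0:ℝ) < 1/2) (by norm_num)
  simp only [smul_eq_mul] at key
  have hmid : (0:ℝ) ≤ 1/2 * a + 1/2 * b := by linarith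
  have h1 : h a ≤ h (1/2 * a + 1/2 * b) :=
    hmono (Set.mem_Ici.mpr ha) (Set.mem_Ici.mpr hmid) (by linarith)
  linarith

lemma close3 (hconv : StrictConvexOn ℝ (Set.Ici 0) h)
    {a b c d : ℝ} (hc : 0 ≤ c) (hca : c < a) (hcb : c < b) (hsum : a + b = c + d) :
    h a + h b < h c + h d := by
  have hd_a : a < d := by linarith
  have hcd : c < d := lt_trans hca hd_a
  have h1 : (0:ℝ) < d - c := by linarith
  set t := (d - a) / (d - c) with ht
  have ht0 : 0 < t := div_pos (by linarith) h1
  have ht1 : t < 1 := (div_lt_one h1).mpr (by linarith)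
  have ea : t * c + (1 - t) * d = a := by rw [ht]; field_simp; ring
  have eb : (1 - t) * c + t * d = b := by
    have h' : (1 - t) * c + t * d = c + d - (t * c + (1 - t) * d) := by ring
    rw [h', ea]; linarith
  have k1 := hconv.2 (Set.mem_Ici.mpr hc) (Set.mem_Ici.mpr (by linarith : (0:ℝ) ≤ d))
    hcd.ne ht0 (show (0:ℝ) < 1 - t by linarith) (by ring)
  have k2 := hconv.2 (Set.mem_Ici.mpr hc) (Set.mem_Ici.mpr (by linarith : (0:ℝ) ≤ d))
    hcd.ne (show (0:ℝ) < 1 - t by linarith) ht0 (by ring)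
  simp only [smul_eq_mul] at k1 k2
  rw [ea] at k1
  rw [eb] at k2
  linarith

lemma close2 (hconv : StrictConvexOn ℝ (Set.Ici 0) h) (hmono : MonotoneOn h (Set.Ici 0))
    {a b c d : ℝ} (ha : 0 ≤ a) (hb : 0 ≤ b) (hc : 0 ≤ c)
    (hsum : a + b < c + d) (hsd : a + b ≤ d) :
    h a + h b < h c + h d := by
  have hd : (0:ℝ) ≤ d := le_trans (by linarith) hsd
  have key : h a + h b ≤ h 0 + h (a + b) := by
    rcases eq_or_lt_of_le ha with rfl | ha'
    · simp
    · rcases eq_or_lt_of_le hb with rfl | hb'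
      · simp [add_comm]
      · exact (close3 hconv le_rfl ha' hb' (by ring)).le
  rcases eq_or_lt_of_le hsd with heq | hlt
  · have hc' : 0 < c := by linarith
    have k1 : h 0 < h c := h_strictMono hconv hmono le_rfl hc'
    have k2 : h (a + b) ≤ h d := by rw [heq]
    linarith
  · have h2 : h (a + b) < h d := h_strictMono hconv hmono (by linarith) hlt
    have h3 : h 0 ≤ h c := hmono (Set.mem_Ici.mpr le_rfl) (Set.mem_Ici.mpr hc) hc
    linarith

lemma close1 (hconv : StrictConvexOn ℝ (Set.Ici 0) h) (hmono : MonotoneOn h (Set.Ici 0))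
    {a b a' b' : ℝ} (ha' : 0 ≤ a') (haa : a' < a) (hb' : 0 ≤ b') (hbb : b' < b) :
    h a' + h b' < h a + h b :=
  add_lt_add (h_strictMono hconv hmono ha' haa) (h_strictMono hconv hmono hb' hbb)

end Convexity

section GeomA
variable {h : ℝ → ℝ}

lemma lemA (hconv : StrictConvexOn ℝ (Set.Ici 0) h) (hmono : MonotoneOn h (Set.Ici 0))
    {X1 Y1 X2 Y2 z : ℝ}
    (hX1 : X1 ∈ Set.Ico (0:ℝ) 1) (hY1 : Y1 ∈ Set.Ico (0:ℝ) 1)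
    (hX2 : X2 ∈ Set.Ico (0:ℝ) 1) (hY2 : Y2 ∈ Set.Ico (0:ℝ) 1)
    (hne1 : X1 ≠ Y1) (hne2 : X2 ≠ Y2) (hne3 : X1 ≠ Y2) (hne4 : X2 ≠ Y1)
    (hp1 : posPath X1 Y1) (hp2 : ¬ posPath X2 Y2)
    (hz1 : inArc X1 Y1 z) (hz2 : inArc X2 Y2 z) :
    h (circDist X1 Y2) + h (circDist X2 Y1) < h (circDist X1 Y1) + h (circDist X2 Y2) := by
  unfold posPath at hp1 hp2
  unfold inArc at hz1 hz2
  unfold circDist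
  set b := Int.fract (Y1 - X1) with hbdef
  set c := Int.fract (X2 - X1) with hcdef
  set d := Int.fract (Y2 - X1) with hddef
  set w := Int.fract (z - X1) with hwdef
  have hb0 : (0:ℝ) ≤ b := Int.fract_nonneg _
  have hb1 : b < 1 := Int.fract_lt_one _
  have hc0 : (0:ℝ) ≤ c := Int.fract_nonneg _
  have hc1 : c < 1 := Int.fract_lt_one _
  have hd0 : (0:ℝ) ≤ d := Int.fract_nonneg _
  have hd1 : d < 1 := Int.fract_lt_one _
  have hw0 : (0:ℝ) ≤ w := Int.fract_nonneg _
  have hw1 : w < 1 := Int.fract_lt_one _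
  have F1 : Int.fract (Y2 - X2) = Int.fract (d - c) := (fract_shift Y2 X2 X1).symm
  have F2 : Int.fract (z - Y2) = Int.fract (w - d) := (fract_shift z Y2 X1).symm
  have F3 : Int.fract (X2 - Y2) = Int.fract (c - d) := (fract_shift X2 Y2 X1).symm
  have GX1Y2 : Int.fract (X1 - Y2) = 1 - d := fract_rev hX1 hY2 hne3
  have GX1Y1 : Int.fract (X1 - Y1) = 1 - b := fract_rev hX1 hY1 hne1
  have GY1X2 : Int.fract (Y1 - X2) = Int.fract (b - c) := (fract_shift Y1 X2 X1).symm
  have GX2Y1 : Int.fract (X2 - Y1) = Int.fract (c - b) := (fract_shift X2 Y1 X1).symm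
  rw [F1, F2, F3] at hz2
  rw [F1] at hp2
  rw [GX1Y2, GX1Y1, GY1X2, GX2Y1, F1, F3]
  have nbc : b ≠ c := coord_ne X1 hY1 hX2 hne4.symm
  have hwb : 0 < w ∧ w < b := by
    rcases hz1 with ⟨_, hw⟩ | ⟨hb', _⟩
    · exact hw
    · linarith
  have hbpos : 0 < b := lt_trans hwb.1 hwb.2
  have hdc : 1/2 < Int.fract (d - c) := not_le.mp hp2
  have hz2' : 0 < Int.fract (w - d) ∧ Int.fract (w - d) < Int.fract (c - d) := by
    rcases hz2 with ⟨h1, _⟩ | ⟨_, h2⟩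
    · exact absurd h1 hp2
    · exact h2
  rcases fract_cases hd0 hd1 hc0 hc1 with ⟨hcd_le, e_dc⟩ | ⟨hdc_lt, e_dc⟩
  · -- c ≤ d, fract (d - c) = d - c > 1/2
    rw [e_dc] at hdc ⊢
    have e_cd : Int.fract (c - d) = c - d + 1 := by
      rcases fract_cases hc0 hc1 hd0 hd1 with ⟨h1, e⟩ | ⟨h1, e⟩
      · linarith
      · exact e
    rw [e_cd] at hz2' ⊢
    have e_wd : Int.fract (w - d) = w - d + 1 := by
      rcases fract_cases hw0 hw1 hd0 hd1 with ⟨h1, e⟩ | ⟨h1, e⟩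
      · linarith [hp1, hwb.2]
      · exact e
    rw [e_wd] at hz2'
    have hwc : w < c := by linarith [hz2'.2]
    have hcpos : 0 < c := lt_trans hwb.1 hwc
    have m1 : min d (1 - d) = 1 - d := min_eq_right (by linarith)
    have m3 : min b (1 - b) = b := min_eq_left (by linarith)
    have m4 : min (d - c) (c - d + 1) = c - d + 1 := min_eq_right (by linarith)
    rw [m1, m3, m4]
    rcases fract_cases hb0 hb1 hc0 hc1 with ⟨hcb, e_bc⟩ | ⟨hbc, e_bc⟩
    · -- c < b
      have hcb' : c < b := lt_of_le_of_ne hcb (Ne.symm nbc)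
      have e_cb : Int.fract (c - b) = c - b + 1 := by
        rcases fract_cases hc0 hc1 hb0 hb1 with ⟨h1, e⟩ | ⟨h1, e⟩
        · linarith
        · exact e
      rw [e_bc, e_cb]
      have m2 : min (b - c) (c - b + 1) = b - c := min_eq_left (by linarith)
      rw [m2]
      have := close1 hconv hmono (show (0:ℝ) ≤ 1 - d by linarith)
        (show (1:ℝ) - d < c - d + 1 by linarith) (show (0:ℝ) ≤ b - c by linarith)
        (show b - c < b by linarith)
      linarith
    · -- b < c
      have e_cb : Int.fract (c - b) = c - b := by
        rcases fract_cases hc0 hc1 hb0 hb1 with ⟨h1, e⟩ | ⟨h1, e⟩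
        · exact e
        · linarith
      rw [e_bc, e_cb]
      have m2 : min (b - c + 1) (c - b) = c - b := min_eq_right (by linarith)
      rw [m2]
      exact close2 hconv hmono (show (0:ℝ) ≤ 1 - d by linarith)
        (show (0:ℝ) ≤ c - b by linarith) (show (0:ℝ) ≤ b by linarith)
        (by linarith) (by linarith)
  · -- d < c, fract (d - c) = d - c + 1 > 1/2, i.e. c - d < 1/2
    rw [e_dc] at hdc ⊢
    have e_cd : Int.fract (c - d) = c - d := by
      rcases fract_cases hc0 hc1 hd0 hd1 with ⟨h1, e⟩ | ⟨h1, e⟩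
      · exact e
      · linarith
    rw [e_cd] at hz2' ⊢
    have e_wd : Int.fract (w - d) = w - d := by
      rcases fract_cases hw0 hw1 hd0 hd1 with ⟨h1, e⟩ | ⟨h1, e⟩
      · exact e
      · exfalso
        rw [e] at hz2'
        linarith [hz2'.2]
    rw [e_wd] at hz2'
    have hdw : d < w := by linarith [hz2'.1]
    have hwc : w < c := by linarith [hz2'.2]
    have m1 : min d (1 - d) = d := min_eq_left (by linarith [hwb.2, hp1])
    have m3 : min b (1 - b) = b := min_eq_left (by linarith)
    have m4 : min (d - c + 1) (c - d) = c - d := min_eq_right (by linarith)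
    rw [m1, m3, m4]
    rcases fract_cases hb0 hb1 hc0 hc1 with ⟨hcb, e_bc⟩ | ⟨hbc, e_bc⟩
    · -- c < b
      have hcb' : c < b := lt_of_le_of_ne hcb (Ne.symm nbc)
      have e_cb : Int.fract (c - b) = c - b + 1 := by
        rcases fract_cases hc0 hc1 hb0 hb1 with ⟨h1, e⟩ | ⟨h1, e⟩
        · linarith
        · exact e
      rw [e_bc, e_cb]
      have m2 : min (b - c) (c - b + 1) = b - c := min_eq_left (by linarith)
      rw [m2]
      have := close2 hconv hmono (show (0:ℝ) ≤ d by linarith)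
        (show (0:ℝ) ≤ b - c by linarith) (show (0:ℝ) ≤ c - d by linarith)
        (show d + (b - c) < (c - d) + b by linarith) (show d + (b - c) ≤ b by linarith)
      linarith
    · -- b < c
      have e_cb : Int.fract (c - b) = c - b := by
        rcases fract_cases hc0 hc1 hb0 hb1 with ⟨h1, e⟩ | ⟨h1, e⟩
        · exact e
        · linarith
      rw [e_bc, e_cb]
      have m2 : min (b - c + 1) (c - b) = c - b := min_eq_right (by linarith)
      rw [m2]
      have := close1 hconv hmono (show (0:ℝ) ≤ d by linarith)
        (show d < b by linarith) (show (0:ℝ) ≤ c - b by linarith)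
        (show c - b < c - d by linarith)
      linarith

end GeomA

section GeomB
variable {h : ℝ → ℝ}

lemma lemB (hconv : StrictConvexOn ℝ (Set.Ici 0) h) (hmono : MonotoneOn h (Set.Ici 0))
    {X1 Y1 X2 Y2 : ℝ}
    (hX1 : X1 ∈ Set.Ico (0:ℝ) 1) (hY1 : Y1 ∈ Set.Ico (0:ℝ) 1)
    (hX2 : X2 ∈ Set.Ico (0:ℝ) 1) (hY2 : Y2 ∈ Set.Ico (0:ℝ) 1)
    (hne1 : X1 ≠ Y1) (hne2 : X2 ≠ Y2) (hne3 : X1 ≠ Y2) (hne4 : X2 ≠ Y1)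
    (hne5 : X1 ≠ X2) (hne6 : Y1 ≠ Y2)
    (hp1 : posPath X1 Y1) (hp2 : posPath X2 Y2)
    (hsub : ∀ z, inArc X1 Y1 z → inArc X2 Y2 z) :
    h (circDist X1 Y2) + h (circDist X2 Y1) < h (circDist X1 Y1) + h (circDist X2 Y2) := by
  unfold posPath at hp1 hp2
  unfold circDist
  set b := Int.fract (Y1 - X1) with hbdef
  set c := Int.fract (X2 - X1) with hcdef
  set d := Int.fract (Y2 - X1) with hddef
  have hb0 : (0:ℝ) ≤ b := Int.fract_nonneg _
  have hb1 : b < 1 := Int.fract_lt_one _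
  have hc0 : (0:ℝ) ≤ c := Int.fract_nonneg _
  have hc1 : c < 1 := Int.fract_lt_one _
  have hd0 : (0:ℝ) ≤ d := Int.fract_nonneg _
  have hd1 : d < 1 := Int.fract_lt_one _
  have h00 : Int.fract (X1 - X1) = 0 := by rw [sub_self, Int.fract_zero]
  have F1 : Int.fract (Y2 - X2) = Int.fract (d - c) := (fract_shift Y2 X2 X1).symm
  have F3 : Int.fract (X2 - Y2) = Int.fract (c - d) := (fract_shift X2 Y2 X1).symm
  have GX1Y2 : Int.fract (X1 - Y2) = 1 - d := fract_rev hX1 hY2 hne3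
  have GX1Y1 : Int.fract (X1 - Y1) = 1 - b := fract_rev hX1 hY1 hne1
  have GY1X2 : Int.fract (Y1 - X2) = Int.fract (b - c) := (fract_shift Y1 X2 X1).symm
  have GX2Y1 : Int.fract (X2 - Y1) = Int.fract (c - b) := (fract_shift X2 Y1 X1).symm
  rw [GX1Y2, GX1Y1, GY1X2, GX2Y1, F1, F3]
  have hp2' : Int.fract (d - c) ≤ 1/2 := by rw [← F1]; exact hp2
  have nb0 : b ≠ 0 := by
    have t := coord_ne X1 hY1 hX1 (Ne.symm hne1); rwa [h00] at t
  have nc0 : c ≠ 0 := by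
    have t := coord_ne X1 hX2 hX1 (Ne.symm hne5); rwa [h00] at t
  have nd0 : d ≠ 0 := by
    have t := coord_ne X1 hY2 hX1 (Ne.symm hne3); rwa [h00] at t
  have nbd : b ≠ d := coord_ne X1 hY1 hY2 hne6
  have ncd : c ≠ d := coord_ne X1 hX2 hY2 hne2
  have hbpos : 0 < b := lt_of_le_of_ne hb0 (Ne.symm nb0)
  have hcpos : 0 < c := lt_of_le_of_ne hc0 (Ne.symm nc0)
  have hdpos : 0 < d := lt_of_le_of_ne hd0 (Ne.symm nd0)
  have harc : ∀ t : ℝ, 0 < t → t < b →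
      0 < Int.fract (t - c) ∧ Int.fract (t - c) < Int.fract (d - c) := by
    intro t ht0 htb
    have ht1 : t < 1 := by linarith [hp1]
    have htfr : Int.fract (X1 + t - X1) = t := by
      rw [show X1 + t - X1 = t by ring]
      exact Int.fract_eq_self.mpr ⟨ht0.le, ht1⟩
    have hin : inArc X1 Y1 (X1 + t) := by
      unfold inArc
      exact Or.inl ⟨hp1, by rw [htfr]; exact ht0, by rw [htfr]; exact htb⟩
    have hout := hsub _ hin
    unfold inArc at hout
    have FT : Int.fract (X1 + t - X2) = Int.fract (t - c) := by
      rw [coord_fract X1 (X1 + t) X2, htfr]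
    rcases hout with ⟨_, h2, h3⟩ | ⟨hgt, _⟩
    · rw [FT] at h2 h3
      rw [F1] at h3
      exact ⟨h2, h3⟩
    · rw [F1] at hgt; linarith
  rcases fract_cases hd0 hd1 hc0 hc1 with ⟨hcd_le, e_dc⟩ | ⟨hdc_lt, e_dc⟩
  · -- c < d : impossible
    exfalso
    set t0 := min b c / 2 with ht0def
    have ht00 : 0 < t0 := by
      have := lt_min hbpos hcpos; positivity
    have ht0b : t0 < b := by
      have h1 : min b c ≤ b := min_le_left _ _
      rw [ht0def]; linarith
    have ht0c : t0 < c := by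
      have h1 : min b c ≤ c := min_le_right _ _
      rw [ht0def]; linarith
    obtain ⟨k1, k2⟩ := harc t0 ht00 ht0b
    have e_t0c : Int.fract (t0 - c) = t0 - c + 1 := by
      rcases fract_cases ht00.le (by linarith [hp1] : t0 < 1) hc0 hc1 with ⟨h1, e⟩ | ⟨h1, e⟩
      · linarith
      · exact e
    rw [e_t0c, e_dc] at k2
    linarith
  · -- d < c
    rw [e_dc] at hp2'
    have hbd : b < d := by
      rcases lt_or_gt_of_ne nbd with hlt | hgt
      · exact hlt
      · exfalso
        obtain ⟨k1, k2⟩ := harc d hdpos hgt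
        exact lt_irrefl _ k2
    have hd2 : d < 1/2 := by linarith
    have m1 : min d (1 - d) = d := min_eq_left (by linarith)
    have m3 : min b (1 - b) = b := min_eq_left (by linarith [hp1])
    have e_cd : Int.fract (c - d) = c - d := by
      rcases fract_cases hc0 hc1 hd0 hd1 with ⟨h1, e⟩ | ⟨h1, e⟩
      · exact e
      · linarith
    have e_bc : Int.fract (b - c) = b - c + 1 := by
      rcases fract_cases hb0 hb1 hc0 hc1 with ⟨h1, e⟩ | ⟨h1, e⟩
      · linarith
      · exact e
    have e_cb : Int.fract (c - b) = c - b := by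
      rcases fract_cases hc0 hc1 hb0 hb1 with ⟨h1, e⟩ | ⟨h1, e⟩
      · exact e
      · linarith
    rw [m1, m3, e_dc, e_cd, e_bc, e_cb]
    have m2 : min (b - c + 1) (c - b) = b - c + 1 := min_eq_left (by linarith)
    have m4 : min (d - c + 1) (c - d) = d - c + 1 := min_eq_left (by linarith)
    rw [m2, m4]
    exact close3 hconv hb0 hbd (show b < b - c + 1 by linarith) (by ring)

end GeomB

theorem optimal_paths_same_orientation_no_nesting (P : ℕ)
    (h : ℝ → ℝ) (hconv : StrictConvexOn ℝ (Set.Ici 0) h)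
    (hmono : MonotoneOn h (Set.Ici 0))
    (x y : Fin P → ℝ)
    (hx : ∀ k, x k ∈ Set.Ico (0:ℝ) 1) (hy : ∀ k, y k ∈ Set.Ico (0:ℝ) 1)
    (hxinj : ∀ k l, k ≠ l → x k ≠ x l) (hyinj : ∀ k l, k ≠ l → y k ≠ y l)
    (hxy : ∀ k l, x k ≠ y l)
    (σ : Equiv.Perm (Fin P))
    (hopt : ∀ τ : Equiv.Perm (Fin P),
      ∑ k, h (circDist (x k) (y (σ k))) ≤ ∑ k, h (circDist (x k) (y (τ k))))
    (l k : Fin P) (hlk : l ≠ k)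
    (hinter : ∃ z : ℝ, inArc (x l) (y (σ l)) z ∧ inArc (x k) (y (σ k)) z) :
    (posPath (x l) (y (σ l)) ↔ posPath (x k) (y (σ k))) ∧
    ¬ ({z : ℝ | inArc (x l) (y (σ l)) z} ⊆ {z : ℝ | inArc (x k) (y (σ k)) z}) ∧
    ¬ ({z : ℝ | inArc (x k) (y (σ k)) z} ⊆ {z : ℝ | inArc (x l) (y (σ l)) z}) := by
  obtain ⟨z, hz1, hz2⟩ := hinter
  -- notation
  have hσlk : σ l ≠ σ k := fun e => hlk (σ.injective e)
  have hne1 : x l ≠ y (σ l) := hxy l (σ l)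
  have hne2 : x k ≠ y (σ k) := hxy k (σ k)
  have hne3 : x l ≠ y (σ k) := hxy l (σ k)
  have hne4 : x k ≠ y (σ l) := hxy k (σ l)
  have hne5 : x l ≠ x k := hxinj l k hlk
  have hne6 : y (σ l) ≠ y (σ k) := hyinj (σ l) (σ k) hσlk
  -- the swap inequality coming from optimality
  have hswap : h (circDist (x l) (y (σ l))) + h (circDist (x k) (y (σ k))) ≤
      h (circDist (x l) (y (σ k))) + h (circDist (x k) (y (σ l))) := by
    have H := hopt ((Equiv.swap l k).trans σ)
    have hkmem : k ∈ (univ : Finset (Fin P)).erase l :=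
      Finset.mem_erase.mpr ⟨Ne.symm hlk, Finset.mem_univ k⟩
    have dec : ∀ g : Fin P → ℝ, ∑ j, g j
        = g l + (g k + ∑ j ∈ ((univ : Finset (Fin P)).erase l).erase k, g j) := by
      intro g
      rw [Finset.add_sum_erase _ g hkmem, Finset.add_sum_erase _ g (Finset.mem_univ l)]
    rw [dec (fun j => h (circDist (x j) (y (σ j)))),
        dec (fun j => h (circDist (x j) (y (((Equiv.swap l k).trans σ) j))))] at H
    have htail : ∑ j ∈ ((univ : Finset (Fin P)).erase l).erase k,
        h (circDist (x j) (y (((Equiv.swap l k).trans σ) j)))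
        = ∑ j ∈ ((univ : Finset (Fin P)).erase l).erase k,
        h (circDist (x j) (y (σ j))) := by
      apply Finset.sum_congr rfl
      intro j hj
      have hj1 := Finset.mem_erase.mp hj
      have hj2 := Finset.mem_erase.mp hj1.2
      rw [Equiv.trans_apply, Equiv.swap_apply_of_ne_of_ne hj2.1 hj1.1]
    rw [htail] at H
    have e1 : ((Equiv.swap l k).trans σ) l = σ k := by
      rw [Equiv.trans_apply, Equiv.swap_apply_left]
    have e2 : ((Equiv.swap l k).trans σ) k = σ l := by
      rw [Equiv.trans_apply, Equiv.swap_apply_right]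
    rw [e1, e2] at H
    linarith
  -- orientation
  have hor : posPath (x l) (y (σ l)) ↔ posPath (x k) (y (σ k)) := by
    constructor
    · intro hp1
      by_contra hp2
      have := lemA hconv hmono (hx l) (hy (σ l)) (hx k) (hy (σ k))
        hne1 hne2 hne3 hne4 hp1 hp2 hz1 hz2
      linarith
    · intro hp2
      by_contra hp1
      have := lemA hconv hmono (hx k) (hy (σ k)) (hx l) (hy (σ l))
        hne2 hne1 hne4 hne3 hp2 hp1 hz2 hz1
      linarith
  refine ⟨hor, ?_, ?_⟩
  · intro hsub
    by_cases hp1 : posPath (x l) (y (σ l))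
    · have hp2 := hor.mp hp1
      have := lemB hconv hmono (hx l) (hy (σ l)) (hx k) (hy (σ k))
        hne1 hne2 hne3 hne4 hne5 hne6 hp1 hp2 (fun z hz => hsub hz)
      linarith
    · have hp2 : ¬ posPath (x k) (y (σ k)) := fun hp => hp1 (hor.mpr hp)
      obtain ⟨hq1, hiff1⟩ := rev_path (hx l) (hy (σ l)) hne1 hp1
      obtain ⟨hq2, hiff2⟩ := rev_path (hx k) (hy (σ k)) hne2 hp2
      have := lemB hconv hmono (hy (σ l)) (hx l) (hy (σ k)) (hx k)
        (Ne.symm hne1) (Ne.symm hne2) (Ne.symm hne4) (Ne.symm hne3)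
        hne6 hne5 hq1 hq2
        (fun z hz => (hiff2 z).mp (hsub ((hiff1 z).mpr hz)))
      rw [circDist_comm (y (σ l)) (x l), circDist_comm (y (σ l)) (x k),
        circDist_comm (y (σ k)) (x l), circDist_comm (y (σ k)) (x k)] at this
      linarith
  · intro hsub
    by_cases hp2 : posPath (x k) (y (σ k))
    · have hp1 := hor.mpr hp2
      have := lemB hconv hmono (hx k) (hy (σ k)) (hx l) (hy (σ l))
        hne2 hne1 hne4 hne3 (Ne.symm hne5) (Ne.symm hne6) hp2 hp1 (fun z hz => hsub hz)
      linarith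
    · have hp1 : ¬ posPath (x l) (y (σ l)) := fun hp => hp2 (hor.mp hp)
      obtain ⟨hq1, hiff1⟩ := rev_path (hx l) (hy (σ l)) hne1 hp1
      obtain ⟨hq2, hiff2⟩ := rev_path (hx k) (hy (σ k)) hne2 hp2
      have := lemB hconv hmono (hy (σ k)) (hx k) (hy (σ l)) (hx l)
        (Ne.symm hne2) (Ne.symm hne1) (Ne.symm hne3) (Ne.symm hne4)
        (Ne.symm hne6) (Ne.symm hne5) hq2 hq1
        (fun z hz => (hiff1 z).mp (hsub ((hiff2 z).mpr hz)))
      rw [circDist_comm (y (σ l)) (x l), circDist_comm (y (σ l)) (x k),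
        circDist_comm (y (σ k)) (x l), circDist_comm (y (σ k)) (x k)] at this
      linarith
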